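/- arXiv:2509.05678 — 3 statements merged into one kernel-verified Lean document; each statement's English description precedes it below -/
import Mathlib

section
/- For the default weight w(t) = 1/(1+t²) − 1 with centered version w̃_{ij} = w(|i−j|) − w₁·1{i≠j}/(n(n−1)), one has lim_{n→∞} (1/n) Σ_{i=1}^n Σ_{j=1}^n w̃_{ij}² = 2 Σ_{t=1}^∞ 1/(1+t²)². -/
open Finset Filter

/-- The default weight `w(t) = 1/(1+t²) − 1`. -/
noncomputable def wDefault (t : ℕ) : ℝ := 1 / (1 + (t : ℝ) ^ 2) - 1

/-- `w₁ = Σ_{i≠j} w(|i−j|)` for the default weight. -/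
noncomputable def wOne (n : ℕ) : ℝ :=
  ∑ i : Fin n, ∑ j : Fin n,
    if i = j then 0 else wDefault (((i : ℕ) : ℤ) - ((j : ℕ) : ℤ)).natAbs

/-- Centered default weights `w̃_{ij} = w(|i−j|) − w₁·1{i≠j}/(n(n−1))`. -/
noncomputable def wTilde (n : ℕ) (i j : Fin n) : ℝ :=
  wDefault (((i : ℕ) : ℤ) - ((j : ℕ) : ℤ)).natAbs -
    (if i = j then 0 else wOne n / ((n : ℝ) * ((n : ℝ) - 1)))

noncomputable def pfun (t : ℕ) : ℝ := if t = 0 then 0 else 1 / (1 + (t : ℝ) ^ 2)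
noncomputable def qfun (t : ℕ) : ℝ := (pfun t) ^ 2

lemma pfun_nonneg (t : ℕ) : 0 ≤ pfun t := by
  unfold pfun; split
  · exact le_rfl
  · positivity

lemma pfun_le_one (t : ℕ) : pfun t ≤ 1 := by
  unfold pfun; split
  · norm_num
  · rw [div_le_one (by positivity)]; nlinarith [sq_nonneg (t:ℝ)]

lemma pfun_le (t : ℕ) : pfun t ≤ 1 / (t : ℝ) ^ 2 := by
  unfold pfun; split
  · simp
  · apply div_le_div_of_nonneg_left one_pos.le (by positivity)
    nlinarith

lemma summable_pfun : Summable pfun :=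
  Summable.of_nonneg_of_le pfun_nonneg pfun_le (Real.summable_one_div_nat_pow.mpr one_lt_two)

lemma qfun_nonneg (t : ℕ) : 0 ≤ qfun t := sq_nonneg _

lemma summable_qfun : Summable qfun := by
  apply Summable.of_nonneg_of_le qfun_nonneg _ summable_pfun
  intro t
  unfold qfun
  nlinarith [pfun_nonneg t, pfun_le_one t]

lemma summable_tqfun : Summable (fun t : ℕ => (t:ℝ) * qfun t) := by
  apply Summable.of_nonneg_of_le
    (fun t => mul_nonneg (Nat.cast_nonneg t) (qfun_nonneg t)) _ summable_pfun
  intro t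
  unfold qfun pfun
  split
  · simp
  · rw [div_pow, one_pow, mul_one_div]
    rw [div_le_div_iff₀ (by positivity) (by positivity)]
    nlinarith [sq_nonneg (t:ℝ), sq_nonneg (1 + (t:ℝ)^2)]

lemma sum_abs_diff (f : ℕ → ℝ) (hf : f 0 = 0) (n : ℕ) :
    (∑ i : Fin n, ∑ j : Fin n, f (((i : ℕ) : ℤ) - ((j : ℕ) : ℤ)).natAbs)
      = 2 * ∑ t ∈ Finset.range n, ((n : ℝ) - t) * f t := by
  induction n with
  | zero => simp
  | succ n ih =>
    have hrow : ∀ i : Fin (n+1), (∑ j : Fin (n+1), f (((i:ℕ):ℤ) - ((j:ℕ):ℤ)).natAbs)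
        = (∑ j : Fin n, f (((i:ℕ):ℤ) - ((j:ℕ):ℤ)).natAbs) + f (((i:ℕ):ℤ) - (n:ℤ)).natAbs := by
      intro i
      rw [Fin.sum_univ_castSucc]
      simp
    rw [Fin.sum_univ_castSucc]
    simp_rw [hrow]
    rw [Finset.sum_add_distrib]
    simp only [Fin.coe_castSucc, Fin.val_last]
    have hcol : ∀ i : Fin n, f (((i:ℕ):ℤ) - (n:ℤ)).natAbs = f (n - (i:ℕ)) := by
      intro i; congr 1; have := i.isLt; omega
    have hlastrow : ∀ j : Fin n, f ((n:ℤ) - ((j:ℕ):ℤ)).natAbs = f (n - (j:ℕ)) := by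
      intro j; congr 1; have := j.isLt; omega
    have h0 : f ((n:ℤ) - (n:ℤ)).natAbs = 0 := by simp [hf]
    have hsum : ∑ j : Fin n, f (n - (j:ℕ)) = ∑ t ∈ Finset.range (n+1), f t := by
      rw [Fin.sum_univ_eq_sum_range (fun j => f (n - j)) n, Finset.sum_range_succ', hf, add_zero,
        ← Finset.sum_range_reflect (fun i => f (i+1)) n]
      apply Finset.sum_congr rfl
      intro j hj
      rw [Finset.mem_range] at hj
      congr 1
      omega
    simp_rw [hcol, hlastrow]
    rw [ih, h0, hsum]
    have expand : ∑ t ∈ Finset.range (n+1), (((n:ℕ)+1 : ℝ) - t) * f t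
        = (∑ t ∈ Finset.range n, ((n:ℝ) - t) * f t) + ∑ t ∈ Finset.range (n+1), f t := by
      rw [Finset.sum_range_succ (fun t => (((n:ℕ)+1 : ℝ) - t) * f t), Finset.sum_range_succ f n]
      have h1 : ∑ t ∈ Finset.range n, (((n:ℕ)+1:ℝ) - t) * f t
          = ∑ t ∈ Finset.range n, (((n:ℝ) - t) * f t + f t) :=
        Finset.sum_congr rfl (by intro t _; push_cast; ring)
      rw [h1, Finset.sum_add_distrib]
      push_cast
      ring
    push_cast [expand] at *
    ring

lemma offdiag_count (n : ℕ) :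
    (∑ i : Fin n, ∑ j : Fin n, if i = j then (0:ℝ) else 1) = (n:ℝ)^2 - n := by
  have : ∀ i : Fin n, (∑ j : Fin n, if i = j then (0:ℝ) else 1) = (n:ℝ) - 1 := by
    intro i
    have h1 : (∑ j : Fin n, if i = j then (0:ℝ) else 1)
        = ∑ j : Fin n, (1 - if i = j then (1:ℝ) else 0) := by
      apply Finset.sum_congr rfl; intro j _; split <;> ring
    rw [h1, Finset.sum_sub_distrib]
    simp
  rw [Finset.sum_congr rfl (fun i _ => this i)]
  simp
  ring

lemma natAbs_ne_zero_of_ne {n : ℕ} {i j : Fin n} (h : i ≠ j) :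
    (((i : ℕ) : ℤ) - ((j : ℕ) : ℤ)).natAbs ≠ 0 := by
  have : (i : ℕ) ≠ (j : ℕ) := fun hc => h (Fin.ext hc)
  omega

lemma wOne_eq (n : ℕ) :
    wOne n = (∑ i : Fin n, ∑ j : Fin n, pfun (((i : ℕ) : ℤ) - ((j : ℕ) : ℤ)).natAbs)
      - ((n:ℝ)^2 - n) := by
  rw [← offdiag_count n, ← Finset.sum_sub_distrib]
  unfold wOne
  apply Finset.sum_congr rfl; intro i _
  rw [← Finset.sum_sub_distrib]
  apply Finset.sum_congr rfl; intro j _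
  by_cases h : i = j
  · simp [h, pfun]
  · simp only [h, if_neg h, if_false]
    rw [pfun, if_neg (natAbs_ne_zero_of_ne h)]
    rfl

lemma sum_sq_eq (n : ℕ) (hn : 2 ≤ n) :
    (∑ i : Fin n, ∑ j : Fin n, (wTilde n i j) ^ 2)
      = (∑ i : Fin n, ∑ j : Fin n, qfun (((i : ℕ) : ℤ) - ((j : ℕ) : ℤ)).natAbs)
        - (∑ i : Fin n, ∑ j : Fin n, pfun (((i : ℕ) : ℤ) - ((j : ℕ) : ℤ)).natAbs)^2
            / ((n:ℝ) * ((n:ℝ) - 1)) := by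
  set A := ∑ i : Fin n, ∑ j : Fin n, pfun (((i : ℕ) : ℤ) - ((j : ℕ) : ℤ)).natAbs with hA
  set B := ∑ i : Fin n, ∑ j : Fin n, qfun (((i : ℕ) : ℤ) - ((j : ℕ) : ℤ)).natAbs with hB
  have hN : (n:ℝ) * ((n:ℝ) - 1) ≠ 0 := by
    have h2 : (2:ℝ) ≤ (n:ℝ) := by exact_mod_cast hn
    have h0 : (0:ℝ) < (n:ℝ) := by linarith
    have h1 : (0:ℝ) < (n:ℝ) - 1 := by linarith
    positivity
  set d : ℝ := 1 + wOne n / ((n:ℝ) * ((n:ℝ) - 1)) with hdd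
  have hpt : ∀ i j : Fin n, (wTilde n i j) ^ 2
      = qfun (((i : ℕ) : ℤ) - ((j : ℕ) : ℤ)).natAbs
        - 2 * d * pfun (((i : ℕ) : ℤ) - ((j : ℕ) : ℤ)).natAbs
        + d ^ 2 * (if i = j then 0 else 1) := by
    intro i j
    by_cases h : i = j
    · subst h
      have ht : (((i : ℕ) : ℤ) - ((i : ℕ) : ℤ)).natAbs = 0 := by omega
      simp [wTilde, ht, wDefault, pfun, qfun]
    · have ht := natAbs_ne_zero_of_ne h
      simp only [wTilde, wDefault, qfun, pfun, if_neg h, if_neg ht, hdd]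
      ring
  have hsum : (∑ i : Fin n, ∑ j : Fin n, (wTilde n i j) ^ 2)
      = B - 2 * d * A + d ^ 2 * ((n:ℝ)^2 - n) := by
    rw [← offdiag_count n, hA, hB]
    rw [Finset.mul_sum, Finset.mul_sum, ← Finset.sum_sub_distrib, ← Finset.sum_add_distrib]
    apply Finset.sum_congr rfl; intro i _
    rw [Finset.mul_sum, Finset.mul_sum, ← Finset.sum_sub_distrib, ← Finset.sum_add_distrib]
    exact Finset.sum_congr rfl (fun j _ => hpt i j)
  have hd : d = A / ((n:ℝ) * ((n:ℝ) - 1)) := by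
    rw [hdd, wOne_eq n, ← hA]
    have hn1' : (n:ℝ) - 1 ≠ 0 := fun h => hN (by rw [h, mul_zero])
    field_simp
    ring
  rw [hsum, hd]
  field_simp
  ring

lemma tendsto_Bterm :
    Tendsto (fun n : ℕ => (2 * ∑ t ∈ Finset.range n, ((n:ℝ) - t) * qfun t) / n)
      atTop (nhds (2 * ∑' t, qfun t)) := by
  have h1 : Tendsto (fun n : ℕ => ∑ t ∈ Finset.range n, qfun t) atTop
      (nhds (∑' t, qfun t)) := summable_qfun.hasSum.tendsto_sum_nat
  have h2 : Tendsto (fun n : ℕ => (∑ t ∈ Finset.range n, (t:ℝ) * qfun t) * (n:ℝ)⁻¹)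
      atTop (nhds 0) := by
    have := summable_tqfun.hasSum.tendsto_sum_nat.mul tendsto_inv_atTop_nhds_zero_nat
    simpa using this
  have hmain : Tendsto (fun n : ℕ => 2 * (∑ t ∈ Finset.range n, qfun t)
      - 2 * ((∑ t ∈ Finset.range n, (t:ℝ) * qfun t) * (n:ℝ)⁻¹)) atTop
      (nhds (2 * ∑' t, qfun t)) := by
    have := (h1.const_mul 2).sub (h2.const_mul 2)
    simpa using this
  apply hmain.congr'
  filter_upwards [eventually_ge_atTop 1] with n hn
  have hn0 : (n:ℝ) ≠ 0 := by positivity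
  have hsplit : ∑ t ∈ Finset.range n, ((n:ℝ) - t) * qfun t
      = (n:ℝ) * (∑ t ∈ Finset.range n, qfun t) - ∑ t ∈ Finset.range n, (t:ℝ) * qfun t := by
    rw [Finset.mul_sum, ← Finset.sum_sub_distrib]
    apply Finset.sum_congr rfl; intro t _; ring
  rw [hsplit]
  field_simp

lemma tendsto_Aterm :
    Tendsto (fun n : ℕ => (2 * ∑ t ∈ Finset.range n, ((n:ℝ) - t) * pfun t)^2
      / (((n:ℝ) * ((n:ℝ) - 1)) * n)) atTop (nhds 0) := by
  set P := ∑' t, pfun t with hP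
  have hP0 : 0 ≤ P := tsum_nonneg pfun_nonneg
  have hupper : Tendsto (fun n : ℕ => 4 * P^2 * ((n:ℝ) - 1)⁻¹) atTop (nhds 0) := by
    have ht : Tendsto (fun n : ℕ => (n:ℝ) - 1) atTop atTop := by
      have := tendsto_atTop_add_const_right atTop (-1 : ℝ) tendsto_natCast_atTop_atTop
      simpa [sub_eq_add_neg] using this
    have := (ht.inv_tendsto_atTop).const_mul (4 * P^2)
    simpa using this
  apply tendsto_of_tendsto_of_tendsto_of_le_of_le' tendsto_const_nhds hupper
  · filter_upwards [eventually_ge_atTop 2] with n hn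
    have h2 : (2:ℝ) ≤ (n:ℝ) := by exact_mod_cast hn
    have h0 : (0:ℝ) < (n:ℝ) := by linarith
    have hn1 : (0:ℝ) < (n:ℝ) - 1 := by linarith
    have hD := mul_pos (mul_pos h0 hn1) h0
    positivity
  · filter_upwards [eventually_ge_atTop 2] with n hn
    have h2 : (2:ℝ) ≤ (n:ℝ) := by exact_mod_cast hn
    have hn0 : (n:ℝ) ≠ 0 := by positivity
    have hn1 : (0:ℝ) < (n:ℝ) - 1 := by linarith
    have h0 : (0:ℝ) < (n:ℝ) := by linarith
    have hD := mul_pos (mul_pos h0 hn1) h0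
    have hS : ∑ t ∈ Finset.range n, pfun t ≤ P :=
      Summable.sum_le_tsum (Finset.range n) (fun i _ => pfun_nonneg i) summable_pfun
    have hA0 : (0:ℝ) ≤ 2 * ∑ t ∈ Finset.range n, ((n:ℝ) - t) * pfun t := by
      apply mul_nonneg (by norm_num)
      apply Finset.sum_nonneg
      intro t ht
      rw [Finset.mem_range] at ht
      have : (t:ℝ) ≤ (n:ℝ) := by exact_mod_cast ht.le
      exact mul_nonneg (by linarith) (pfun_nonneg t)
    have hAle : 2 * ∑ t ∈ Finset.range n, ((n:ℝ) - t) * pfun t ≤ 2 * ((n:ℝ) * P) := by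
      have hstep : ∑ t ∈ Finset.range n, ((n:ℝ) - t) * pfun t
          ≤ ∑ t ∈ Finset.range n, (n:ℝ) * pfun t := by
        apply Finset.sum_le_sum
        intro t _
        apply mul_le_mul_of_nonneg_right _ (pfun_nonneg t)
        have : (0:ℝ) ≤ (t:ℝ) := Nat.cast_nonneg t
        linarith
      have hstep2 : ∑ t ∈ Finset.range n, (n:ℝ) * pfun t ≤ (n:ℝ) * P := by
        rw [← Finset.mul_sum]
        apply mul_le_mul_of_nonneg_left hS (by positivity)
      linarith
    calc (2 * ∑ t ∈ Finset.range n, ((n:ℝ) - t) * pfun t)^2 / (((n:ℝ) * ((n:ℝ) - 1)) * n)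
        ≤ (2 * ((n:ℝ) * P))^2 / (((n:ℝ) * ((n:ℝ) - 1)) * n) := by
          have hsq : (2 * ∑ t ∈ Finset.range n, ((n:ℝ) - t) * pfun t)^2
              ≤ (2 * ((n:ℝ) * P))^2 := pow_le_pow_left₀ hA0 hAle 2
          gcongr
      _ = 4 * P^2 * ((n:ℝ) - 1)⁻¹ := by field_simp; ring

/-- for the default weight `w(t) = 1/(1+t²) − 1` with centered
version `w̃_{ij}`, one has
`lim_{n→∞} (1/n) Σ_{i,j} w̃_{ij}² = 2 Σ_{t=1}^∞ 1/(1+t²)²`. -/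
theorem centered_default_weight_sum_of_squares :
    Tendsto (fun n : ℕ => (∑ i : Fin n, ∑ j : Fin n, (wTilde n i j) ^ 2) / (n : ℝ))
      atTop
      (nhds (2 * ∑' t : ℕ, 1 / (1 + ((t : ℝ) + 1) ^ 2) ^ 2)) := by
  have hq0 : qfun 0 = 0 := by simp [qfun, pfun]
  have hp0 : pfun 0 = 0 := by simp [pfun]
  have htsum : (2 : ℝ) * ∑' t, qfun t = 2 * ∑' t : ℕ, 1 / (1 + ((t : ℝ) + 1) ^ 2) ^ 2 := by
    rw [Summable.tsum_eq_zero_add summable_qfun, hq0, zero_add]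
    congr 1
    apply tsum_congr
    intro t
    simp only [qfun, pfun, Nat.succ_ne_zero, if_false]
    push_cast
    rw [div_pow, one_pow]
  rw [← htsum]
  have hmain : Tendsto (fun n : ℕ =>
      (2 * ∑ t ∈ Finset.range n, ((n:ℝ) - t) * qfun t) / n
        - (2 * ∑ t ∈ Finset.range n, ((n:ℝ) - t) * pfun t)^2 / (((n:ℝ) * ((n:ℝ) - 1)) * n))
      atTop (nhds (2 * ∑' t, qfun t)) := by
    have := tendsto_Bterm.sub tendsto_Aterm
    simpa using this
  apply hmain.congr'
  filter_upwards [eventually_ge_atTop 2] with n hn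
  rw [sum_sq_eq n hn, sum_abs_diff qfun hq0 n, sum_abs_diff pfun hp0 n]
  rw [sub_div]
  congr 1
  rw [div_div]
end

section
/- For the default weight w(t) = 1/(1+t²) − 1 with centered version w̃_{ij}, there exist constants 0 < c ≤ C and an integer N such that for all n ≥ N: c ≤ max_{i,j} |w̃_{ij}| ≤ C, c ≤ max_i Σ_{j=1}^n |w̃_{ij}| ≤ C, c·n ≤ Σ_{i,j} w̃_{ij}² ≤ C·n, and c·n ≤ Σ_{i=1}^n (Σ_{j=1}^n |w̃_{ij}|)² ≤ C·n; that is, w̃₀₊ ≍ w̃₁₊ ≍ 1 and w̃₂₊ ≍ w̃₃₊ ≍ n. -/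
open Finset Filter

/-- `w̃₀₊ = max_{i,j} |w̃_{ij}|`. -/
noncomputable def wZeroPlus (n : ℕ) : ℝ := ⨆ i : Fin n, ⨆ j : Fin n, |wTilde n i j|

/-- `w̃₁₊ = max_i Σ_j |w̃_{ij}|`. -/
noncomputable def wOnePlus (n : ℕ) : ℝ := ⨆ i : Fin n, ∑ j : Fin n, |wTilde n i j|

/-- `w̃₂₊ = Σ_{i,j} w̃_{ij}²`. -/
noncomputable def wTwoPlus (n : ℕ) : ℝ := ∑ i : Fin n, ∑ j : Fin n, (wTilde n i j) ^ 2

/-- `w̃₃₊ = Σ_i (Σ_j |w̃_{ij}|)²`. -/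
noncomputable def wThreePlus (n : ℕ) : ℝ :=
  ∑ i : Fin n, (∑ j : Fin n, |wTilde n i j|) ^ 2

/-! ### Auxiliary machinery -/

noncomputable def fK (k : ℕ) : ℝ := 1 / (1 + (k : ℝ) ^ 2)

lemma fK_nonneg (k : ℕ) : 0 ≤ fK k := by unfold fK; positivity

lemma fK_zero : fK 0 = 1 := by norm_num [fK]

lemma fK_one : fK 1 = 1/2 := by norm_num [fK]

lemma fK_le_one (k : ℕ) : fK k ≤ 1 := by
  unfold fK
  rw [div_le_one (by positivity)]
  nlinarith [sq_nonneg ((k:ℝ))]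

lemma fK_le_half {k : ℕ} (hk : 1 ≤ k) : fK k ≤ 1/2 := by
  unfold fK
  rw [div_le_div_iff₀ (by positivity) (by norm_num)]
  have : (1:ℝ) ≤ (k:ℝ) := by exact_mod_cast hk
  nlinarith

lemma wDefault_eq (k : ℕ) : wDefault k = fK k - 1 := rfl

lemma fK_le_tele (k : ℕ) : fK k ≤ 3 / ((k:ℝ) + 1) - 3 / ((k:ℝ) + 2) := by
  have h : 3 / ((k:ℝ) + 1) - 3 / ((k:ℝ) + 2) = 3 / (((k:ℝ) + 1) * ((k:ℝ) + 2)) := by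
    rw [div_sub_div _ _ (by positivity) (by positivity)]; ring_nf
  rw [h]
  unfold fK
  rw [div_le_div_iff₀ (by positivity) (by positivity)]
  rcases Nat.eq_zero_or_pos k with h0 | h1
  · subst h0; norm_num
  · have : (1:ℝ) ≤ (k:ℝ) := by exact_mod_cast h1
    nlinarith

lemma sum_fK_range (m : ℕ) : ∑ k ∈ Finset.range m, fK k ≤ 3 := by
  set f : ℕ → ℝ := fun k => 3 / ((k:ℝ) + 1) with hf
  calc ∑ k ∈ Finset.range m, fK k
      ≤ ∑ k ∈ Finset.range m, (f k - f (k+1)) := by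
        apply Finset.sum_le_sum; intro k _
        have := fK_le_tele k
        simp only [hf]
        push_cast
        rw [show ((k:ℝ) + 1 + 1) = (k:ℝ) + 2 by ring]
        linarith
    _ = f 0 - f m := Finset.sum_range_sub' f m
    _ ≤ 3 := by
        have : 0 ≤ f m := by positivity
        simp only [hf]; norm_num
        linarith

lemma sum_fK_finset (t : Finset ℕ) : ∑ k ∈ t, fK k ≤ 3 := by
  have hsub : t ⊆ Finset.range (t.sup id + 1) := fun x hx =>
    Finset.mem_range.2 (Nat.lt_succ_of_le (Finset.le_sup (f := id) hx))
  calc ∑ k ∈ t, fK k ≤ ∑ k ∈ Finset.range (t.sup id + 1), fK k :=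
        Finset.sum_le_sum_of_subset_of_nonneg hsub (fun k _ _ => fK_nonneg k)
    _ ≤ 3 := sum_fK_range _

/-- abbreviation for the distance -/
def dd {n : ℕ} (i j : Fin n) : ℕ := (((i : ℕ) : ℤ) - ((j : ℕ) : ℤ)).natAbs

lemma dd_self {n : ℕ} (i : Fin n) : dd i i = 0 := by simp [dd]

lemma dd_pos {n : ℕ} {i j : Fin n} (h : i ≠ j) : 1 ≤ dd i j := by
  have hv : (i : ℕ) ≠ (j : ℕ) := fun hc => h (Fin.ext hc)
  unfold dd
  omega

lemma row_fK {n : ℕ} (i : Fin n) : ∑ j : Fin n, fK (dd i j) ≤ 6 := by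
  classical
  rw [← Finset.sum_filter_add_sum_filter_not Finset.univ (fun j : Fin n => (j:ℕ) < (i:ℕ))]
  have key : ∀ s : Finset (Fin n), (∀ a ∈ s, ∀ b ∈ s, dd i a = dd i b → a = b) →
      ∑ j ∈ s, fK (dd i j) ≤ 3 := by
    intro s hinj
    calc ∑ j ∈ s, fK (dd i j) = ∑ k ∈ s.image (fun j => dd i j), fK k :=
          (Finset.sum_image hinj).symm
      _ ≤ 3 := sum_fK_finset _
  have h1 : ∑ j ∈ Finset.univ.filter (fun j : Fin n => (j:ℕ) < (i:ℕ)), fK (dd i j) ≤ 3 := by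
    apply key
    intro a ha b hb hab
    simp only [Finset.mem_filter] at ha hb
    unfold dd at hab
    have : (a : ℕ) = (b : ℕ) := by omega
    exact Fin.ext this
  have h2 : ∑ j ∈ Finset.univ.filter (fun j : Fin n => ¬ (j:ℕ) < (i:ℕ)), fK (dd i j) ≤ 3 := by
    apply key
    intro a ha b hb hab
    simp only [Finset.mem_filter] at ha hb
    unfold dd at hab
    have : (a : ℕ) = (b : ℕ) := by omega
    exact Fin.ext this
  linarith

lemma sum_ite_ne {n : ℕ} (i : Fin n) (g : Fin n → ℝ) :
    ∑ j : Fin n, (if i = j then 0 else g j) = (∑ j : Fin n, g j) - g i := by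
  have h1 : ∑ j : Fin n, (if i = j then g j else 0) = g i := by
    rw [Finset.sum_ite_eq]; simp
  have h2 : ∀ j : Fin n, (if i = j then (0:ℝ) else g j) = g j - (if i = j then g j else 0) := by
    intro j; by_cases h : i = j <;> simp [h]
  rw [Finset.sum_congr rfl (fun j _ => h2 j), Finset.sum_sub_distrib, h1]

noncomputable def TT (n : ℕ) : ℝ :=
  ∑ i : Fin n, ∑ j : Fin n, if i = j then 0 else fK (dd i j)

noncomputable def dl (n : ℕ) : ℝ := TT n / ((n : ℝ) * ((n : ℝ) - 1))

lemma TT_nonneg (n : ℕ) : 0 ≤ TT n := by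
  apply Finset.sum_nonneg; intro i _
  apply Finset.sum_nonneg; intro j _
  by_cases h : i = j <;> simp [h, fK_nonneg]

lemma TT_le (n : ℕ) : TT n ≤ 5 * n := by
  unfold TT
  calc ∑ i : Fin n, ∑ j : Fin n, (if i = j then 0 else fK (dd i j))
      ≤ ∑ _i : Fin n, (5:ℝ) := by
        apply Finset.sum_le_sum; intro i _
        rw [sum_ite_ne i (fun j => fK (dd i j))]
        have := row_fK i
        rw [dd_self, fK_zero]
        linarith
    _ = 5 * n := by
        rw [Finset.sum_const, Finset.card_univ, Fintype.card_fin, nsmul_eq_mul]; ring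

lemma wOne_eq_s12 (n : ℕ) : wOne n = TT n - (n : ℝ) * ((n : ℝ) - 1) := by
  unfold wOne TT
  have key : ∀ i : Fin n,
      ∑ j : Fin n, (if i = j then (0:ℝ) else wDefault (dd i j)) =
      (∑ j : Fin n, (if i = j then (0:ℝ) else fK (dd i j))) -
      (∑ j : Fin n, (if i = j then (0:ℝ) else 1)) := by
    intro i
    rw [← Finset.sum_sub_distrib]
    apply Finset.sum_congr rfl
    intro j _
    by_cases h : i = j <;> simp [h, wDefault_eq]
  have key2 : ∀ i : Fin n, ∑ j : Fin n, (if i = j then (0:ℝ) else 1) = (n:ℝ) - 1 := by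
    intro i
    rw [sum_ite_ne i (fun _ => (1:ℝ))]
    rw [Finset.sum_const, Finset.card_univ, Fintype.card_fin, nsmul_eq_mul]; ring
  calc ∑ i : Fin n, ∑ j : Fin n, (if i = j then (0:ℝ) else wDefault (dd i j))
      = ∑ i : Fin n, ((∑ j : Fin n, (if i = j then (0:ℝ) else fK (dd i j))) - ((n:ℝ) - 1)) := by
        apply Finset.sum_congr rfl; intro i _; rw [key i, key2 i]
    _ = TT n - (n : ℝ) * ((n : ℝ) - 1) := by
        rw [Finset.sum_sub_distrib, Finset.sum_const, Finset.card_univ, Fintype.card_fin,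
          nsmul_eq_mul]
        unfold TT
        ring

lemma wTilde_diag (n : ℕ) (i : Fin n) : wTilde n i i = 0 := by
  simp [wTilde, wDefault]

lemma wTilde_ne {n : ℕ} (hn : 2 ≤ n) {i j : Fin n} (h : i ≠ j) :
    wTilde n i j = fK (dd i j) - dl n := by
  have hnR : (2:ℝ) ≤ (n:ℝ) := by exact_mod_cast hn
  have hD : (n : ℝ) * ((n : ℝ) - 1) ≠ 0 := by nlinarith
  unfold wTilde dl
  rw [if_neg h, wOne_eq_s12 n]
  show wDefault (dd i j) - (TT n - (n:ℝ) * ((n:ℝ)-1)) / ((n:ℝ) * ((n:ℝ)-1)) = _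
  rw [wDefault_eq]
  rw [sub_div, div_self hD]
  ring

/-- for the default weight, the centered weight summaries satisfy
`w̃₀₊ ≍ w̃₁₊ ≍ 1` and `w̃₂₊ ≍ w̃₃₊ ≍ n`: there are constants `0 < c ≤ C` and an
integer `N` such that the stated two-sided bounds hold for all `n ≥ N`. -/
theorem centered_default_weight_orders :
    ∃ c C : ℝ, 0 < c ∧ c ≤ C ∧ ∃ N : ℕ, ∀ n : ℕ, N ≤ n →
      (c ≤ wZeroPlus n ∧ wZeroPlus n ≤ C) ∧
      (c ≤ wOnePlus n ∧ wOnePlus n ≤ C) ∧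
      (c * (n : ℝ) ≤ wTwoPlus n ∧ wTwoPlus n ≤ C * (n : ℝ)) ∧
      (c * (n : ℝ) ≤ wThreePlus n ∧ wThreePlus n ≤ C * (n : ℝ)) := by
  refine ⟨1/16, 256, by norm_num, by norm_num, 21, fun n hn => ?_⟩
  have hn2 : 2 ≤ n := by omega
  have hnR : (21:ℝ) ≤ (n:ℝ) := by exact_mod_cast hn
  have hnR0 : (0:ℝ) ≤ (n:ℝ) := by positivity
  haveI hne : Nonempty (Fin n) := ⟨⟨0, by omega⟩⟩
  have hD : (0:ℝ) < (n : ℝ) * ((n : ℝ) - 1) := by nlinarith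
  have hδ0 : 0 ≤ dl n := div_nonneg (TT_nonneg n) (le_of_lt hD)
  have hδ : dl n ≤ 1/4 := by
    unfold dl
    rw [div_le_iff₀ hD]
    nlinarith [TT_le n]
  have hnδ : (n:ℝ) * dl n ≤ 10 := by
    unfold dl
    rw [← mul_div_assoc, div_le_iff₀ hD]
    nlinarith [TT_le n, TT_nonneg n]
  -- pointwise bounds
  have habs1 : ∀ i j : Fin n, |wTilde n i j| ≤ 1 := by
    intro i j
    by_cases h : i = j
    · subst h; rw [wTilde_diag]; simp
    · rw [wTilde_ne hn2 h, abs_le]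
      have h1 := fK_le_half (dd_pos h)
      have h2 := fK_nonneg (dd i j)
      constructor <;> nlinarith
  have habs2 : ∀ i j : Fin n, |wTilde n i j| ≤ fK (dd i j) + dl n := by
    intro i j
    by_cases h : i = j
    · subst h; rw [wTilde_diag, dd_self, fK_zero]; simp; linarith
    · rw [wTilde_ne hn2 h, abs_le]
      have h2 := fK_nonneg (dd i j)
      constructor <;> nlinarith
  have hrow : ∀ i : Fin n, ∑ j : Fin n, |wTilde n i j| ≤ 16 := by
    intro i
    calc ∑ j : Fin n, |wTilde n i j| ≤ ∑ j : Fin n, (fK (dd i j) + dl n) :=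
          Finset.sum_le_sum (fun j _ => habs2 i j)
      _ = (∑ j : Fin n, fK (dd i j)) + (n:ℝ) * dl n := by
          rw [Finset.sum_add_distrib, Finset.sum_const, Finset.card_univ, Fintype.card_fin,
            nsmul_eq_mul]
      _ ≤ 16 := by linarith [row_fK i]
  have hrow0 : ∀ i : Fin n, 0 ≤ ∑ j : Fin n, |wTilde n i j| :=
    fun i => Finset.sum_nonneg (fun j _ => abs_nonneg _)
  -- neighbor with distance 1
  have hlow : ∀ i : Fin n, ∃ j : Fin n, 1/4 ≤ |wTilde n i j| := by
    intro i
    have hnb : ∃ j : Fin n, i ≠ j ∧ dd i j = 1 := by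
      by_cases h : (i:ℕ) + 1 < n
      · refine ⟨⟨(i:ℕ) + 1, h⟩, ?_, ?_⟩
        · intro hc
          have := congrArg Fin.val hc
          simp at this
        · unfold dd; simp only [Fin.val_mk]; omega
      · have h1 : 1 ≤ (i:ℕ) := by have := i.isLt; omega
        refine ⟨⟨(i:ℕ) - 1, by omega⟩, ?_, ?_⟩
        · intro hc
          have := congrArg Fin.val hc
          simp at this
          omega
        · unfold dd; simp only [Fin.val_mk]; omega
    obtain ⟨j, hij, hd⟩ := hnb
    refine ⟨j, ?_⟩
    rw [wTilde_ne hn2 hij, hd, fK_one, abs_of_nonneg (by linarith)]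
    linarith
  have hbd0 : ∀ i : Fin n, BddAbove (Set.range fun j : Fin n => |wTilde n i j|) :=
    fun i => Set.Finite.bddAbove (Set.finite_range _)
  have hbd0' : BddAbove (Set.range fun i : Fin n => ⨆ j : Fin n, |wTilde n i j|) :=
    Set.Finite.bddAbove (Set.finite_range _)
  have hbd1 : BddAbove (Set.range fun i : Fin n => ∑ j : Fin n, |wTilde n i j|) :=
    Set.Finite.bddAbove (Set.finite_range _)
  set i0 : Fin n := ⟨0, by omega⟩ with hi0
  refine ⟨⟨?_, ?_⟩, ⟨?_, ?_⟩, ⟨?_, ?_⟩, ⟨?_, ?_⟩⟩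
  · -- c ≤ wZeroPlus
    obtain ⟨j, hj⟩ := hlow i0
    calc (1:ℝ)/16 ≤ |wTilde n i0 j| := by linarith
      _ ≤ ⨆ j : Fin n, |wTilde n i0 j| := le_ciSup (hbd0 i0) j
      _ ≤ wZeroPlus n := le_ciSup (f := fun i : Fin n => ⨆ j : Fin n, |wTilde n i j|) hbd0' i0
  · -- wZeroPlus ≤ C
    refine ciSup_le fun i => ciSup_le fun j => ?_
    calc |wTilde n i j| ≤ 1 := habs1 i j
      _ ≤ 256 := by norm_num
  · -- c ≤ wOnePlus
    obtain ⟨j, hj⟩ := hlow i0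
    calc (1:ℝ)/16 ≤ |wTilde n i0 j| := by linarith
      _ ≤ ∑ j : Fin n, |wTilde n i0 j| :=
          Finset.single_le_sum (f := fun j : Fin n => |wTilde n i0 j|)
            (fun j _ => abs_nonneg _) (Finset.mem_univ j)
      _ ≤ wOnePlus n := le_ciSup (f := fun i : Fin n => ∑ j : Fin n, |wTilde n i j|) hbd1 i0
  · -- wOnePlus ≤ C
    refine ciSup_le fun i => ?_
    calc ∑ j : Fin n, |wTilde n i j| ≤ 16 := hrow i
      _ ≤ 256 := by norm_num
  · -- c * n ≤ wTwoPlus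
    have hiner : ∀ i : Fin n, (1:ℝ)/16 ≤ ∑ j : Fin n, (wTilde n i j)^2 := by
      intro i
      obtain ⟨j, hj⟩ := hlow i
      have h1 : (1:ℝ)/16 ≤ (wTilde n i j)^2 := by
        nlinarith [sq_abs (wTilde n i j), abs_nonneg (wTilde n i j)]
      calc (1:ℝ)/16 ≤ (wTilde n i j)^2 := h1
        _ ≤ ∑ j : Fin n, (wTilde n i j)^2 :=
            Finset.single_le_sum (f := fun j : Fin n => (wTilde n i j)^2)
              (fun j _ => sq_nonneg _) (Finset.mem_univ j)
    calc (1:ℝ)/16 * (n:ℝ) = ∑ _i : Fin n, (1:ℝ)/16 := by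
          rw [Finset.sum_const, Finset.card_univ, Fintype.card_fin, nsmul_eq_mul]; ring
      _ ≤ wTwoPlus n := Finset.sum_le_sum (fun i _ => hiner i)
  · -- wTwoPlus ≤ C * n
    have hiner : ∀ i : Fin n, ∑ j : Fin n, (wTilde n i j)^2 ≤ 16 := by
      intro i
      calc ∑ j : Fin n, (wTilde n i j)^2 ≤ ∑ j : Fin n, |wTilde n i j| := by
            apply Finset.sum_le_sum; intro j _
            nlinarith [sq_abs (wTilde n i j), abs_nonneg (wTilde n i j), habs1 i j]
        _ ≤ 16 := hrow i
    calc wTwoPlus n ≤ ∑ _i : Fin n, (16:ℝ) := Finset.sum_le_sum (fun i _ => hiner i)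
      _ = 16 * (n:ℝ) := by
          rw [Finset.sum_const, Finset.card_univ, Fintype.card_fin, nsmul_eq_mul]; ring
      _ ≤ 256 * (n:ℝ) := by nlinarith
  · -- c * n ≤ wThreePlus
    have hiner : ∀ i : Fin n, (1:ℝ)/16 ≤ (∑ j : Fin n, |wTilde n i j|)^2 := by
      intro i
      obtain ⟨j, hj⟩ := hlow i
      have h1 : (1:ℝ)/4 ≤ ∑ j : Fin n, |wTilde n i j| :=
        le_trans hj (Finset.single_le_sum (f := fun j : Fin n => |wTilde n i j|)
          (fun j _ => abs_nonneg _) (Finset.mem_univ j))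
      nlinarith
    calc (1:ℝ)/16 * (n:ℝ) = ∑ _i : Fin n, (1:ℝ)/16 := by
          rw [Finset.sum_const, Finset.card_univ, Fintype.card_fin, nsmul_eq_mul]; ring
      _ ≤ wThreePlus n := Finset.sum_le_sum (fun i _ => hiner i)
  · -- wThreePlus ≤ C * n
    have hiner : ∀ i : Fin n, (∑ j : Fin n, |wTilde n i j|)^2 ≤ 256 := by
      intro i
      nlinarith [hrow i, hrow0 i]
    calc wThreePlus n ≤ ∑ _i : Fin n, (256:ℝ) := Finset.sum_le_sum (fun i _ => hiner i)
      _ = 256 * (n:ℝ) := by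
          rw [Finset.sum_const, Finset.card_univ, Fintype.card_fin, nsmul_eq_mul]; ring
end

section
/- Fix α > 0 and, for each n ≥ 2, define the symmetric matrix S⁽ⁿ⁾ with entries S_{ij} = 1 − 1/(1+|i−j|^α) for i,j ∈ {1,…,n}. Let w̃_{ij} be the centered default weights. Then lim_{n→∞} (1/n) Σ_{i=1}^n Σ_{j=1}^n w̃_{ij} S_{ij} = −2 Σ_{t=1}^∞ 1/((1+t²)(1+t^α)); in particular this limit is a nonzero constant, so |tr(W̃ᵀS⁽ⁿ⁾)|/√n → ∞ as n → ∞. -/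
open Finset Filter

/-- The matrix with entries `S_{ij} = 1 − 1/(1+|i−j|^α)`. -/
noncomputable def Salpha (α : ℝ) (n : ℕ) (i j : Fin n) : ℝ :=
  1 - 1 / (1 + (|((i : ℕ) : ℝ) - ((j : ℕ) : ℝ)|) ^ α)

/-- `tr(W̃ᵀS) = Σ_{i,j} w̃_{ij} S_{ij}`. -/
noncomputable def trWS (α : ℝ) (n : ℕ) : ℝ :=
  ∑ i : Fin n, ∑ j : Fin n, wTilde n i j * Salpha α n i j

open Topology

/-! ### Auxiliary definitions and lemmas -/

noncomputable def uA (α : ℝ) (t : ℕ) : ℝ := if t = 0 then 0 else 1 / (1 + (t:ℝ) ^ α)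
noncomputable def gA (α : ℝ) (t : ℕ) : ℝ :=
  if t = 0 then 0 else 1 / ((1 + (t:ℝ) ^ 2) * (1 + (t:ℝ) ^ α))
noncomputable def eA (t : ℕ) : ℝ := if t = 0 then 0 else 1
noncomputable def qA (t : ℕ) : ℝ := if t = 0 then 0 else 1 / (1 + (t:ℝ) ^ 2)

lemma absdiff_sum (F : ℕ → ℝ) (hF : F 0 = 0) (n : ℕ) :
    ∑ i ∈ range n, ∑ j ∈ range n, F ((i:ℤ) - (j:ℤ)).natAbs
      = 2 * ∑ i ∈ range n, ∑ t ∈ range (i+1), F t := by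
  induction n with
  | zero => simp
  | succ n ih =>
    have hrow : ∑ j ∈ range n, F (((n:ℤ)) - (j:ℤ)).natAbs = ∑ t ∈ range (n+1), F t := by
      have h1 : ∑ j ∈ range n, F (((n:ℤ)) - (j:ℤ)).natAbs = ∑ j ∈ range n, F (n - j) := by
        refine Finset.sum_congr rfl fun j hj => ?_
        have hj' := Finset.mem_range.1 hj
        congr 1; omega
      have h2 : ∑ j ∈ range n, F (j + 1) = ∑ j ∈ range n, F (n - j) := by
        rw [← Finset.sum_range_reflect (fun j => F (n - j)) n]
        refine Finset.sum_congr rfl fun j hj => ?_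
        have hj' := Finset.mem_range.1 hj
        congr 1; omega
      rw [h1, ← h2, Finset.sum_range_succ' (fun t => F t) n, hF, add_zero]
    have hcol : ∑ i ∈ range n, F (((i:ℤ)) - (n:ℤ)).natAbs = ∑ t ∈ range (n+1), F t := by
      rw [← hrow]
      refine Finset.sum_congr rfl fun j hj => ?_
      congr 1; omega
    rw [Finset.sum_range_succ (fun i => ∑ j ∈ range (n+1), F ((i:ℤ) - (j:ℤ)).natAbs) n]
    simp only [Finset.sum_range_succ (fun j => F ((_ : ℤ) - (j:ℤ)).natAbs) n]
    rw [Finset.sum_add_distrib, ih, hcol, hrow]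
    have : F (((n:ℤ)) - (n:ℤ)).natAbs = 0 := by simp [hF]
    rw [this, Finset.sum_range_succ (fun i => ∑ t ∈ range (i+1), F t) n]
    ring

lemma absdiff_sum_fin (F : ℕ → ℝ) (hF : F 0 = 0) (n : ℕ) :
    ∑ i : Fin n, ∑ j : Fin n, F (((i:ℕ):ℤ) - ((j:ℕ):ℤ)).natAbs
      = 2 * ∑ i ∈ range n, ∑ t ∈ range (i+1), F t := by
  rw [← absdiff_sum F hF n,
    Fin.sum_univ_eq_sum_range (fun i => ∑ j : Fin n, F (((i:ℕ):ℤ) - ((j:ℕ):ℤ)).natAbs) n]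
  exact Finset.sum_congr rfl fun i _ =>
    Fin.sum_univ_eq_sum_range (fun j => F (((i:ℕ):ℤ) - ((j:ℕ):ℤ)).natAbs) n

lemma diag_iff {n : ℕ} (i j : Fin n) : (((i:ℕ):ℤ) - ((j:ℕ):ℤ)).natAbs = 0 ↔ i = j := by
  rw [Int.natAbs_eq_zero, sub_eq_zero]
  constructor
  · intro h; exact Fin.ext (by exact_mod_cast h)
  · intro h; rw [h]

lemma wDefault_zero : wDefault 0 = 0 := by simp [wDefault]

lemma wOne_eq_s13 (n : ℕ) : wOne n = 2 * ∑ i ∈ range n, ∑ t ∈ range (i+1), wDefault t := by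
  rw [← absdiff_sum_fin wDefault wDefault_zero n, wOne]
  refine Finset.sum_congr rfl fun i _ => Finset.sum_congr rfl fun j _ => ?_
  by_cases h : i = j
  · simp [h, wDefault_zero]
  · rw [if_neg h]

lemma sum_eA (i : ℕ) : ∑ t ∈ range (i+1), eA t = (i : ℝ) := by
  rw [Finset.sum_range_succ' (fun t => eA t) i]
  simp [eA]

lemma gaussR {n : ℕ} (hn : 1 ≤ n) : ∑ i ∈ range n, (i:ℝ) = (n:ℝ) * ((n:ℝ) - 1) / 2 := by
  have h2 := congrArg (fun k : ℕ => (k : ℝ)) (Finset.sum_range_id_mul_two n)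
  push_cast [Nat.cast_sub hn] at h2
  linarith

lemma Salpha_eq {α : ℝ} {n : ℕ} (i j : Fin n) :
    Salpha α n i j = 1 - 1 / (1 + (((((i:ℕ):ℤ) - ((j:ℕ):ℤ)).natAbs : ℝ)) ^ α) := by
  unfold Salpha
  congr 3
  rw [Nat.cast_natAbs]
  push_cast
  ring_nf

set_option maxHeartbeats 1000000 in
lemma trWS_eq (α : ℝ) {n : ℕ} (hn : 2 ≤ n) :
    trWS α n = 2 * ∑ i ∈ range n, ∑ t ∈ range (i+1),
      (-(gA α t) + (1 + wOne n / ((n:ℝ) * ((n:ℝ) - 1))) * uA α t) := by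
  have hnR : (0:ℝ) < (n:ℝ) * ((n:ℝ) - 1) := by
    have : (2:ℝ) ≤ (n:ℝ) := by exact_mod_cast hn
    nlinarith
  set c : ℝ := wOne n / ((n:ℝ) * ((n:ℝ) - 1)) with hc
  have key : ∀ i j : Fin n, wTilde n i j * Salpha α n i j =
      (fun t => (wDefault t - c * eA t) * (1 - 1/(1 + (t:ℝ) ^ α)))
        ((((i:ℕ):ℤ) - ((j:ℕ):ℤ)).natAbs) := by
    intro i j
    rw [Salpha_eq, wTilde]
    by_cases h : i = j
    · rw [if_pos h, ((diag_iff i j).2 h : _ = 0)]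
      simp [eA]
    · rw [if_neg h]
      have hd : (((i:ℕ):ℤ) - ((j:ℕ):ℤ)).natAbs ≠ 0 := fun h0 => h ((diag_iff i j).1 h0)
      simp only [eA, if_neg hd, mul_one]
      rw [hc]
  have h0 : (fun t => (wDefault t - c * eA t) * (1 - 1/(1 + (t:ℝ) ^ α))) 0 = 0 := by
    simp [wDefault_zero, eA]
  have step1 : trWS α n
      = ∑ i : Fin n, ∑ j : Fin n, (fun t => (wDefault t - c * eA t) * (1 - 1/(1 + (t:ℝ) ^ α)))
        ((((i:ℕ):ℤ) - ((j:ℕ):ℤ)).natAbs) := by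
    unfold trWS
    exact Finset.sum_congr rfl fun i _ => Finset.sum_congr rfl fun j _ => key i j
  have step2 := absdiff_sum_fin (fun t => (wDefault t - c * eA t) * (1 - 1/(1 + (t:ℝ) ^ α))) h0 n
  have step3 : ∀ t : ℕ, (wDefault t - c * eA t) * (1 - 1/(1 + (t:ℝ) ^ α))
      = (wDefault t - c * eA t) + (-(gA α t) + (1 + c) * uA α t) := by
    intro t
    by_cases ht : t = 0
    · subst ht; simp [gA, uA, eA, wDefault_zero]
    · have h2 : (0:ℝ) < 1 + (t:ℝ)^2 := by positivity
      have ha : (0:ℝ) < 1 + (t:ℝ)^α := by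
        have : (0:ℝ) < (t:ℝ)^α := Real.rpow_pos_of_pos (by exact_mod_cast Nat.pos_of_ne_zero ht) α
        linarith
      simp only [gA, uA, eA, if_neg ht, wDefault, mul_one]
      field_simp
      ring
  have hz : ∑ i ∈ range n, ∑ t ∈ range (i+1), (wDefault t - c * eA t) = 0 := by
    have hsub : ∑ i ∈ range n, ∑ t ∈ range (i+1), (wDefault t - c * eA t)
        = (∑ i ∈ range n, ∑ t ∈ range (i+1), wDefault t) - c * ∑ i ∈ range n, (i:ℝ) := by
      rw [Finset.mul_sum, ← Finset.sum_sub_distrib]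
      refine Finset.sum_congr rfl fun i _ => ?_
      rw [← sum_eA i, Finset.mul_sum, ← Finset.sum_sub_distrib]
    rw [hsub]
    have hw : ∑ i ∈ range n, ∑ t ∈ range (i+1), wDefault t = wOne n / 2 := by
      rw [wOne_eq_s13]; ring
    rw [gaussR (by omega : 1 ≤ n), hw, hc]
    have hn1 : (n:ℝ) - 1 ≠ 0 := by
      have : (2:ℝ) ≤ (n:ℝ) := by exact_mod_cast hn
      linarith
    field_simp
    ring
  have split : ∑ i ∈ range n, ∑ t ∈ range (i+1), (wDefault t - c * eA t) * (1 - 1/(1 + (t:ℝ)^α))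
      = (∑ i ∈ range n, ∑ t ∈ range (i+1), (wDefault t - c * eA t))
        + ∑ i ∈ range n, ∑ t ∈ range (i+1), (-(gA α t) + (1 + c) * uA α t) := by
    rw [← Finset.sum_add_distrib]
    refine Finset.sum_congr rfl fun i _ => ?_
    rw [← Finset.sum_add_distrib]
    exact Finset.sum_congr rfl fun t _ => step3 t
  rw [step1, step2, split, hz, zero_add]

lemma one_add_c_eq {n : ℕ} (hn : 2 ≤ n) :
    1 + wOne n / ((n:ℝ) * ((n:ℝ) - 1))
      = 2 * (∑ i ∈ range n, ∑ t ∈ range (i+1), qA t) / ((n:ℝ) * ((n:ℝ) - 1)) := by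
  have hnR : (0:ℝ) < (n:ℝ) * ((n:ℝ) - 1) := by
    have : (2:ℝ) ≤ (n:ℝ) := by exact_mod_cast hn
    nlinarith
  have hwq : ∀ t : ℕ, wDefault t = qA t - eA t := by
    intro t
    by_cases ht : t = 0
    · subst ht; simp [wDefault, qA, eA]
    · simp [wDefault, qA, eA, if_neg ht]
  have hsplit : ∑ i ∈ range n, ∑ t ∈ range (i+1), wDefault t
      = (∑ i ∈ range n, ∑ t ∈ range (i+1), qA t) - (n:ℝ) * ((n:ℝ) - 1) / 2 := by
    rw [← gaussR (by omega : 1 ≤ n), ← Finset.sum_sub_distrib]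
    refine Finset.sum_congr rfl fun i _ => ?_
    rw [← sum_eA i, ← Finset.sum_sub_distrib]
    exact Finset.sum_congr rfl fun t _ => hwq t
  rw [wOne_eq_s13, hsplit]
  have hn1 : (n:ℝ) - 1 ≠ 0 := by
    have : (2:ℝ) ≤ (n:ℝ) := by exact_mod_cast hn
    linarith
  field_simp
  ring

lemma uA_nonneg (α : ℝ) (t : ℕ) : 0 ≤ uA α t := by
  unfold uA; split
  · exact le_refl 0
  · positivity

lemma qA_nonneg (t : ℕ) : 0 ≤ qA t := by
  unfold qA; split
  · exact le_refl 0
  · positivity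

lemma gA_nonneg (α : ℝ) (t : ℕ) : 0 ≤ gA α t := by
  unfold gA; split
  · exact le_refl 0
  · rename_i ht
    have : (0:ℝ) < (t:ℝ)^α := Real.rpow_pos_of_pos (by exact_mod_cast Nat.pos_of_ne_zero ht) α
    positivity

lemma uA_tendsto (α : ℝ) (hα : 0 < α) : Tendsto (fun t : ℕ => uA α t) atTop (𝓝 0) := by
  have h1 : Tendsto (fun t : ℕ => (t:ℝ) ^ α) atTop atTop :=
    (tendsto_rpow_atTop hα).comp tendsto_natCast_atTop_atTop
  have h2 : Tendsto (fun t : ℕ => 1 + (t:ℝ) ^ α) atTop atTop :=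
    tendsto_atTop_add_const_left atTop 1 h1
  have h3 : Tendsto (fun t : ℕ => (1 + (t:ℝ) ^ α)⁻¹) atTop (𝓝 0) :=
    tendsto_inv_atTop_zero.comp h2
  refine h3.congr' ?_
  filter_upwards [eventually_ge_atTop 1] with t ht
  rw [uA, if_neg (by omega), one_div]

lemma summable_s (α : ℝ) (hα : 0 < α) :
    Summable (fun t : ℕ => 1 / ((1 + ((t:ℝ) + 1) ^ 2) * (1 + ((t:ℝ) + 1) ^ α))) := by
  have hb : Summable (fun t : ℕ => 1 / ((t:ℝ) + 1) ^ 2) := by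
    have := (summable_nat_add_iff 1).2 (Real.summable_one_div_nat_pow.2 (by norm_num : 1 < 2))
    refine this.congr fun t => by push_cast; ring
  refine Summable.of_nonneg_of_le (fun t => ?_) (fun t => ?_) hb
  · have : (0:ℝ) < ((t:ℝ) + 1) ^ α := Real.rpow_pos_of_pos (by positivity) α
    positivity
  · have htp : (0:ℝ) < (t:ℝ) + 1 := by positivity
    have ha : (0:ℝ) ≤ ((t:ℝ) + 1) ^ α := (Real.rpow_pos_of_pos htp α).le
    have h1 : ((t:ℝ) + 1)^2 ≤ (1 + ((t:ℝ)+1)^2) * (1 + ((t:ℝ)+1)^α) := by nlinarith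
    exact one_div_le_one_div_of_le (by positivity) h1

lemma qA_partial_le (i : ℕ) : ∑ t ∈ range (i+1), qA t ≤ 2 := by
  rw [Finset.sum_range_succ' (fun t => qA t) i]
  have h0 : qA 0 = 0 := by simp [qA]
  rw [h0, add_zero]
  have hle : ∑ t ∈ range i, qA (t+1)
      ≤ ∑ t ∈ range i, ((fun t : ℕ => 2/((t:ℝ)+1)) t - (fun t : ℕ => 2/((t:ℝ)+1)) (t+1)) := by
    refine Finset.sum_le_sum fun t _ => ?_
    have h1 : qA (t+1) = 1 / (1 + ((t:ℝ)+1)^2) := by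
      rw [qA, if_neg (by omega)]; push_cast; ring_nf
    rw [h1]
    simp only
    push_cast
    rw [div_sub_div _ _ (by positivity : ((t:ℝ)+1) ≠ 0) (by positivity : ((t:ℝ)+1+1) ≠ 0)]
    rw [div_le_div_iff₀ (by positivity) (by positivity)]
    nlinarith [Nat.cast_nonneg (α := ℝ) t]
  have htel := Finset.sum_range_sub' (fun t : ℕ => 2/((t:ℝ)+1)) i
  rw [htel] at hle
  have hpos : (0:ℝ) ≤ 2/((i:ℝ)+1) := by positivity
  norm_num at hle
  linarith
/-- fix `α > 0` and take `S_{ij} = 1 − 1/(1+|i−j|^α)`.  Then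
`(1/n) Σ_{i,j} w̃_{ij} S_{ij} → −2 Σ_{t=1}^∞ 1/((1+t²)(1+t^α))`, this limit is a
nonzero constant, and consequently `|tr(W̃ᵀS⁽ⁿ⁾)|/√n → ∞` as `n → ∞`. -/
theorem trace_alignment_limit (α : ℝ) (hα : 0 < α) :
    Tendsto (fun n : ℕ => trWS α n / (n : ℝ)) atTop
        (nhds (-2 * ∑' t : ℕ,
          1 / ((1 + ((t : ℝ) + 1) ^ 2) * (1 + ((t : ℝ) + 1) ^ α)))) ∧
      (-2 * ∑' t : ℕ,
          1 / ((1 + ((t : ℝ) + 1) ^ 2) * (1 + ((t : ℝ) + 1) ^ α))) ≠ 0 ∧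
      Tendsto (fun n : ℕ => |trWS α n| / Real.sqrt (n : ℝ)) atTop atTop := by
  have hs : Summable (fun t : ℕ => 1 / ((1 + ((t:ℝ) + 1) ^ 2) * (1 + ((t:ℝ) + 1) ^ α))) :=
    summable_s α hα
  set L : ℝ := ∑' t : ℕ, 1 / ((1 + ((t:ℝ) + 1) ^ 2) * (1 + ((t:ℝ) + 1) ^ α)) with hLdef
  have hLpos : 0 < L := by
    refine Summable.tsum_pos hs (fun t => by
      have : (0:ℝ) < ((t:ℝ) + 1) ^ α := Real.rpow_pos_of_pos (by positivity) α
      positivity) 0 ?_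
    norm_num [Real.one_rpow]
  -- the partial sums of gA converge to L
  have hAg : Tendsto (fun i : ℕ => ∑ t ∈ range (i+1), gA α t) atTop (𝓝 L) := by
    refine hs.hasSum.tendsto_sum_nat.congr fun i => ?_
    rw [Finset.sum_range_succ' (fun t => gA α t) i]
    have h0 : gA α 0 = 0 := by simp [gA]
    rw [h0, add_zero]
    refine Finset.sum_congr rfl fun t _ => ?_
    rw [gA, if_neg (by omega)]
    push_cast
    ring_nf
  have term1 : Tendsto (fun n : ℕ =>
      -2 * (((n:ℝ)⁻¹) * ∑ i ∈ range n, ∑ t ∈ range (i+1), gA α t)) atTop (𝓝 (-2 * L)) :=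
    hAg.cesaro.const_mul (-2)
  -- second term tends to 0
  have ces_u : Tendsto (fun n : ℕ => ((n:ℝ)⁻¹) * ∑ t ∈ range n, uA α t) atTop (𝓝 0) :=
    (uA_tendsto α hα).cesaro
  have hD : Tendsto (fun n : ℕ => 16 * (((n:ℝ)⁻¹) * ∑ t ∈ range n, uA α t)) atTop (𝓝 0) := by
    simpa using ces_u.const_mul 16
  set R : ℕ → ℝ := fun n => (1 + wOne n / ((n:ℝ) * ((n:ℝ) - 1)))
      * (2 * (((n:ℝ)⁻¹) * ∑ i ∈ range n, ∑ t ∈ range (i+1), uA α t)) with hRdef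
  have hbounds : ∀ n : ℕ, 2 ≤ n →
      0 ≤ R n ∧ R n ≤ 16 * (((n:ℝ)⁻¹) * ∑ t ∈ range n, uA α t) := by
    intro n hn
    have hn2 : (2:ℝ) ≤ (n:ℝ) := by exact_mod_cast hn
    have hnpos : (0:ℝ) < (n:ℝ) := by linarith
    have hnR : (0:ℝ) < (n:ℝ) * ((n:ℝ) - 1) := by nlinarith
    have hQle : ∑ i ∈ range n, ∑ t ∈ range (i+1), qA t ≤ 2 * (n:ℝ) := by
      calc ∑ i ∈ range n, ∑ t ∈ range (i+1), qA t ≤ ∑ _i ∈ range n, (2:ℝ) :=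
            Finset.sum_le_sum fun i _ => qA_partial_le i
        _ = 2 * (n:ℝ) := by simp [mul_comm]
    have hQ0 : 0 ≤ ∑ i ∈ range n, ∑ t ∈ range (i+1), qA t :=
      Finset.sum_nonneg fun i _ => Finset.sum_nonneg fun t _ => qA_nonneg t
    have hc0 : 0 ≤ 1 + wOne n / ((n:ℝ) * ((n:ℝ) - 1)) := by
      rw [one_add_c_eq hn]; positivity
    have hcle : 1 + wOne n / ((n:ℝ) * ((n:ℝ) - 1)) ≤ 8 / (n:ℝ) := by
      rw [one_add_c_eq hn, div_le_div_iff₀ hnR hnpos]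
      nlinarith
    have hU0 : 0 ≤ ∑ t ∈ range n, uA α t :=
      Finset.sum_nonneg fun t _ => uA_nonneg α t
    have hUU : ∑ i ∈ range n, ∑ t ∈ range (i+1), uA α t ≤ (n:ℝ) * ∑ t ∈ range n, uA α t := by
      calc ∑ i ∈ range n, ∑ t ∈ range (i+1), uA α t
          ≤ ∑ _i ∈ range n, ∑ t ∈ range n, uA α t := by
            refine Finset.sum_le_sum fun i hi => ?_
            refine Finset.sum_le_sum_of_subset_of_nonneg ?_ (fun t _ _ => uA_nonneg α t)
            exact Finset.range_subset_range.2 (by simpa using Finset.mem_range.1 hi)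
        _ = (n:ℝ) * ∑ t ∈ range n, uA α t := by simp [mul_comm]
    have hUU0 : 0 ≤ ∑ i ∈ range n, ∑ t ∈ range (i+1), uA α t :=
      Finset.sum_nonneg fun i _ => Finset.sum_nonneg fun t _ => uA_nonneg α t
    have hX0 : 0 ≤ 2 * (((n:ℝ)⁻¹) * ∑ i ∈ range n, ∑ t ∈ range (i+1), uA α t) := by positivity
    constructor
    · exact mul_nonneg hc0 hX0
    · have hXle : 2 * (((n:ℝ)⁻¹) * ∑ i ∈ range n, ∑ t ∈ range (i+1), uA α t)
          ≤ 2 * ∑ t ∈ range n, uA α t := by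
        have h1 : ((n:ℝ)⁻¹) * ∑ i ∈ range n, ∑ t ∈ range (i+1), uA α t
            ≤ ((n:ℝ)⁻¹) * ((n:ℝ) * ∑ t ∈ range n, uA α t) := by
          exact mul_le_mul_of_nonneg_left hUU (by positivity)
        rw [← mul_assoc, inv_mul_cancel₀ hnpos.ne', one_mul] at h1
        linarith
      calc R n ≤ (8 / (n:ℝ)) * (2 * ∑ t ∈ range n, uA α t) := by
            exact mul_le_mul hcle (by linarith) hX0 (by positivity)
        _ = 16 * (((n:ℝ)⁻¹) * ∑ t ∈ range n, uA α t) := by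
            field_simp; ring
  have hR : Tendsto R atTop (𝓝 0) := by
    refine squeeze_zero' ?_ ?_ hD
    · filter_upwards [eventually_ge_atTop 2] with n hn
      exact (hbounds n hn).1
    · filter_upwards [eventually_ge_atTop 2] with n hn
      exact (hbounds n hn).2
  have hE : Tendsto (fun n : ℕ =>
      -2 * (((n:ℝ)⁻¹) * ∑ i ∈ range n, ∑ t ∈ range (i+1), gA α t) + R n)
      atTop (𝓝 (-2 * L)) := by
    simpa using term1.add hR
  have main1 : Tendsto (fun n : ℕ => trWS α n / (n : ℝ)) atTop (𝓝 (-2 * L)) := by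
    refine hE.congr' ?_
    filter_upwards [eventually_ge_atTop 2] with n hn
    have hn2 : (2:ℝ) ≤ (n:ℝ) := by exact_mod_cast hn
    have hnpos : (0:ℝ) < (n:ℝ) := by linarith
    set c : ℝ := wOne n / ((n:ℝ) * ((n:ℝ) - 1)) with hc
    have hsum : ∑ i ∈ range n, ∑ t ∈ range (i+1), (-(gA α t) + (1 + c) * uA α t)
        = -(∑ i ∈ range n, ∑ t ∈ range (i+1), gA α t)
          + (1 + c) * ∑ i ∈ range n, ∑ t ∈ range (i+1), uA α t := by
      rw [Finset.mul_sum, ← Finset.sum_neg_distrib, ← Finset.sum_add_distrib]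
      refine Finset.sum_congr rfl fun i _ => ?_
      rw [Finset.mul_sum, ← Finset.sum_neg_distrib, ← Finset.sum_add_distrib]
    rw [trWS_eq α hn, hsum, hRdef]
    rw [hc]
    have hn1 : (n:ℝ) - 1 ≠ 0 := by linarith
    field_simp
  refine ⟨main1, by linarith, ?_⟩
  have habs : Tendsto (fun n : ℕ => |trWS α n / (n:ℝ)|) atTop (𝓝 |(-2 * L)|) := main1.abs
  have hsq : Tendsto (fun n : ℕ => Real.sqrt n) atTop atTop := by
    have h := (tendsto_rpow_atTop (y := 1/2) (by norm_num)).comp tendsto_natCast_atTop_atTop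
    refine h.congr fun n => ?_
    simp only [Function.comp_apply]
    rw [← Real.sqrt_eq_rpow]
  have h3 : Tendsto (fun n : ℕ => |trWS α n / (n:ℝ)| * Real.sqrt n) atTop atTop :=
    Tendsto.pos_mul_atTop (abs_pos.2 (by linarith : -2 * L ≠ 0)) habs hsq
  refine h3.congr' ?_
  filter_upwards [eventually_ge_atTop 1] with n hn
  have hnpos : (0:ℝ) < (n:ℝ) := by exact_mod_cast Nat.pos_of_ne_zero (by omega)
  have hsp : 0 < Real.sqrt n := Real.sqrt_pos.2 hnpos
  rw [abs_div, abs_of_nonneg hnpos.le, div_mul_eq_mul_div,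
    div_eq_div_iff hnpos.ne' hsp.ne', mul_assoc, Real.mul_self_sqrt hnpos.le]
end
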